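/- Let k ≥ 1, and let ν, τ₂ satisfy c₁ ≤ ν(e) ≤ c₂, 0 ≤ τ₂(e) ≤ c₀, and suppose τ₁(e) = 0. Let (S, D, e) ∈ 𝒜ᵏ, i.e. S = min{k + 2ν(e), (2ν(e)|D| + τ₂(e))/|D|}·D (with S = 0 for D = 0). Define the projected strain D̄ by: if |S| < τ₂(e) + 2ν(e)τ₂(e)/k then D̄ = (1/(2ν(e)))·((|S| − τ₂(e))⁺/|S|)·S (D̄ = 0 if S = 0), and D̄ = D otherwise. Then |D̄ − D| ≤ 2τ₂(e)/k ≤ 2c₀/k. -/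

import Mathlib

/-- Frobenius inner product on 3×3 real matrices. -/
noncomputable def Mdot (A B : Matrix (Fin 3) (Fin 3) ℝ) : ℝ := ∑ i, ∑ j, A i j * B i j

/-- Frobenius norm. -/
noncomputable def Mnorm (A : Matrix (Fin 3) (Fin 3) ℝ) : ℝ := Real.sqrt (Mdot A A)

/-- The approximate stress Sᵏ(D, e) = min{k + 2ν(e), (2ν(e)(|D| − τ₁(e))⁺ + τ₂(e))/|D|}·D,
with Sᵏ(0, e) = 0. -/
noncomputable def Sk (k : ℕ) (ν τ₁ τ₂ : ℝ → ℝ) (D : Matrix (Fin 3) (Fin 3) ℝ) (e : ℝ) :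
    Matrix (Fin 3) (Fin 3) ℝ :=
  if D = 0 then 0
  else min ((k : ℝ) + 2 * ν e) ((2 * ν e * max (Mnorm D - τ₁ e) 0 + τ₂ e) / Mnorm D) • D

/-- Truncation map ((|A| − τ)⁺/|A|)·A, with value 0 at A = 0. -/
noncomputable def trunc (τ : ℝ) (A : Matrix (Fin 3) (Fin 3) ℝ) : Matrix (Fin 3) (Fin 3) ℝ :=
  if A = 0 then 0 else (max (Mnorm A - τ) 0 / Mnorm A) • A

lemma Mdot_self_nonneg (A : Matrix (Fin 3) (Fin 3) ℝ) : 0 ≤ Mdot A A :=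
  Finset.sum_nonneg fun _ _ => Finset.sum_nonneg fun _ _ => mul_self_nonneg _

lemma Mnorm_nonneg (A : Matrix (Fin 3) (Fin 3) ℝ) : 0 ≤ Mnorm A := Real.sqrt_nonneg _

lemma Mnorm_zero : Mnorm (0 : Matrix (Fin 3) (Fin 3) ℝ) = 0 := by simp [Mnorm, Mdot]

lemma Mnorm_smul (c : ℝ) (A : Matrix (Fin 3) (Fin 3) ℝ) : Mnorm (c • A) = |c| * Mnorm A := by
  have h : Mdot (c • A) (c • A) = c ^ 2 * Mdot A A := by
    simp only [Mdot, Matrix.smul_apply, smul_eq_mul, Finset.mul_sum]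
    apply Finset.sum_congr rfl; intro i _
    apply Finset.sum_congr rfl; intro j _
    ring
  rw [Mnorm, h, Real.sqrt_mul (sq_nonneg c), Real.sqrt_sq_eq_abs, Mnorm]

lemma Mnorm_eq_zero {A : Matrix (Fin 3) (Fin 3) ℝ} (h : Mnorm A = 0) : A = 0 := by
  have hle : Mdot A A ≤ 0 := Real.sqrt_eq_zero'.mp h
  have h0 : Mdot A A = 0 := le_antisymm hle (Mdot_self_nonneg A)
  ext i j
  have h1 := (Finset.sum_eq_zero_iff_of_nonneg
    (fun i _ => Finset.sum_nonneg fun j _ => mul_self_nonneg (A i j))).mp h0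
  have h2 := (Finset.sum_eq_zero_iff_of_nonneg
    (fun j _ => mul_self_nonneg (A i j))).mp (h1 i (Finset.mem_univ i))
  have h3 := mul_self_eq_zero.mp (h2 j (Finset.mem_univ j))
  simpa using h3

lemma Mnorm_pos {A : Matrix (Fin 3) (Fin 3) ℝ} (h : A ≠ 0) : 0 < Mnorm A :=
  (Mnorm_nonneg A).lt_of_ne (fun h' => h (Mnorm_eq_zero h'.symm))

theorem stmt10 (k : ℕ) (hk : 1 ≤ k) (c₀ c₁ c₂ : ℝ) (hc₀ : 0 < c₀) (hc₁ : 0 < c₁) (hc₂ : 0 < c₂)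
    (νe τe : ℝ) (hν : νe ∈ Set.Icc c₁ c₂) (hτ : τe ∈ Set.Icc 0 c₀) (e : ℝ)
    (S D : Matrix (Fin 3) (Fin 3) ℝ)
    (hS : S = Sk k (fun _ => νe) (fun _ => 0) (fun _ => τe) D e)
    (Dbar : Matrix (Fin 3) (Fin 3) ℝ)
    (hDbar : Dbar = if Mnorm S < τe + 2 * νe * τe / k then (1 / (2 * νe)) • trunc τe S else D) :
    Mnorm (Dbar - D) ≤ 2 * τe / k ∧ 2 * τe / k ≤ 2 * c₀ / k := by
  obtain ⟨hν1, hν2⟩ := hν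
  obtain ⟨hτ1, hτ2⟩ := hτ
  have hkpos : (0:ℝ) < k := by exact_mod_cast hk
  have hν0 : 0 < νe := lt_of_lt_of_le hc₁ hν1
  have hnn : (0:ℝ) ≤ 2 * τe / k := div_nonneg (by linarith) hkpos.le
  refine ⟨?_, by gcongr⟩
  by_cases hD : D = 0
  · subst hD
    simp only [Sk, if_pos rfl] at hS
    subst hS
    have hDb : Dbar = 0 := by
      rw [hDbar]; split_ifs <;> simp [trunc]
    rw [hDb, sub_zero, Mnorm_zero]
    exact hnn
  · have hdpos : 0 < Mnorm D := Mnorm_pos hD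
    set d := Mnorm D with hd
    set m := min ((k:ℝ) + 2 * νe) ((2 * νe * d + τe) / d) with hm
    have hS' : S = m • D := by
      rw [hS, Sk, if_neg hD]
      congr 2
      rw [sub_zero, max_eq_left hdpos.le]
    have hmpos : 0 < m := by
      apply lt_min
      · have : (1:ℝ) ≤ (k:ℝ) := by exact_mod_cast hk
        linarith
      · apply div_pos _ hdpos
        nlinarith
    have hSnorm : Mnorm S = m * d := by rw [hS', Mnorm_smul, abs_of_pos hmpos]
    rw [hDbar]
    split_ifs with hcase
    · have hSne : S ≠ 0 := by rw [hS']; exact smul_ne_zero hmpos.ne' hD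
      have h2νd : 0 < 2 * νe * d := by positivity
      have hED : (1 / (2 * νe)) • trunc τe S - D
          = (max (m * d - τe) 0 / (2 * νe * d) - 1) • D := by
        rw [trunc, if_neg hSne, hSnorm, hS', smul_smul, smul_smul,
          show 1 / (2 * νe) * (max (m * d - τe) 0 / (m * d)) * m
              = max (m * d - τe) 0 / (2 * νe * d) by
            field_simp [hmpos.ne', hν0.ne', hdpos.ne'],
          sub_smul, one_smul]
      rw [hED, Mnorm_smul]
      rcases le_total ((2 * νe * d + τe) / d) ((k:ℝ) + 2 * νe) with hmin | hmin
      · have hmd : m * d = 2 * νe * d + τe := by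
          rw [hm, min_eq_right hmin]; field_simp
        rw [hmd, add_sub_cancel_right, max_eq_left h2νd.le, div_self h2νd.ne',
          sub_self, abs_zero, zero_mul]
        exact hnn
      · have hmeq : m = (k:ℝ) + 2 * νe := min_eq_left hmin
        have hkd : (k:ℝ) * d ≤ τe := by
          rw [le_div_iff₀ hdpos] at hmin
          nlinarith
        have hdle : d ≤ 2 * τe / k := by
          rw [le_div_iff₀ hkpos]
          nlinarith
        have hc : |max (m * d - τe) 0 / (2 * νe * d) - 1| ≤ 1 := by
          rw [abs_le]
          constructor
          · have : 0 ≤ max (m * d - τe) 0 / (2 * νe * d) :=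
              div_nonneg (le_max_right _ _) h2νd.le
            linarith
          · have hmdle : m * d - τe ≤ 2 * νe * d := by rw [hmeq]; nlinarith
            have hmax : max (m * d - τe) 0 ≤ 2 * νe * d := max_le hmdle h2νd.le
            have := (div_le_one h2νd).mpr hmax
            linarith
        calc |max (m * d - τe) 0 / (2 * νe * d) - 1| * d
            ≤ 1 * d := mul_le_mul_of_nonneg_right hc hdpos.le
          _ = d := one_mul d
          _ ≤ 2 * τe / k := hdle
    · rw [sub_self, Mnorm_zero]
      exact hnn
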